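/- arXiv:1802.01208 — 5 statements merged into one kernel-verified Lean document; each statement's English description precedes it below -/
import Mathlib

section
/- Let M₁, …, M_k be n×n matrices with nonnegative entries such that each Mᵢ is primitive (some power of Mᵢ has all entries strictly positive) and each Mᵢ has strictly positive diagonal entries. Then the product M₁⋯M_k is primitive. -/
/-- A square nonnegative matrix is primitive if some positive power of it
has all entries strictly positive. -/
def IsPrimitive {n : ℕ} (M : Matrix (Fin n) (Fin n) ℝ) : Prop :=
  ∃ m : ℕ, 0 < m ∧ ∀ i j, 0 < (M ^ m) i j

namespace PrimAux

variable {n : ℕ}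

lemma mul_entry_pos {A B : Matrix (Fin n) (Fin n) ℝ}
    (hA : ∀ a b, 0 ≤ A a b) (hB : ∀ a b, 0 ≤ B a b)
    {i l j : Fin n} (h1 : 0 < A i l) (h2 : 0 < B l j) :
    0 < (A * B) i j := by
  rw [Matrix.mul_apply]
  refine Finset.sum_pos' (fun x _ => mul_nonneg (hA _ _) (hB _ _)) ⟨l, Finset.mem_univ l, ?_⟩
  exact mul_pos h1 h2

lemma exists_of_mul_entry_pos {A B : Matrix (Fin n) (Fin n) ℝ}
    (hA : ∀ a b, 0 ≤ A a b) (hB : ∀ a b, 0 ≤ B a b)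
    {i j : Fin n} (h : 0 < (A * B) i j) :
    ∃ l, 0 < A i l ∧ 0 < B l j := by
  by_contra hc
  push_neg at hc
  rw [Matrix.mul_apply] at h
  have : (∑ l, A i l * B l j) = 0 := by
    apply Finset.sum_eq_zero
    intro l _
    rcases lt_or_eq_of_le (hA i l) with hpos | heq
    · have := hc l hpos
      have hb0 : B l j = 0 := le_antisymm this (hB l j)
      rw [hb0, mul_zero]
    · rw [← heq, zero_mul]
  simp [this] at h

lemma list_prod_nonneg : ∀ (L : List (Matrix (Fin n) (Fin n) ℝ)),
    (∀ A ∈ L, ∀ a b, 0 ≤ A a b) → ∀ a b, 0 ≤ L.prod a b := by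
  intro L
  induction L with
  | nil =>
    intro _ a b
    simp [Matrix.one_apply]
    positivity
  | cons A L ih =>
    intro h a b
    rw [List.prod_cons, Matrix.mul_apply]
    exact Finset.sum_nonneg fun x _ =>
      mul_nonneg (h A (by simp) a x) (ih (fun B hB => h B (by simp [hB])) x b)

lemma list_prod_diag_pos : ∀ (L : List (Matrix (Fin n) (Fin n) ℝ)),
    (∀ A ∈ L, (∀ a b, 0 ≤ A a b) ∧ ∀ a, 0 < A a a) → ∀ a, 0 < L.prod a a := by
  intro L
  induction L with
  | nil => intro _ a; simp [Matrix.one_apply]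
  | cons A L ih =>
    intro h a
    rw [List.prod_cons]
    have hL : ∀ B ∈ L, (∀ a b, 0 ≤ B a b) ∧ ∀ a, 0 < B a a :=
      fun B hB => h B (by simp [hB])
    exact mul_entry_pos (h A (by simp)).1
      (list_prod_nonneg L fun B hB => (hL B hB).1)
      ((h A (by simp)).2 a) (ih hL a)

lemma pow_nonneg {A : Matrix (Fin n) (Fin n) ℝ} (hA : ∀ a b, 0 ≤ A a b) :
    ∀ m, ∀ a b, 0 ≤ (A ^ m) a b := by
  intro m
  induction m with
  | zero => intro a b; simp [Matrix.one_apply]; positivity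
  | succ m ih =>
    intro a b
    rw [pow_succ, Matrix.mul_apply]
    exact Finset.sum_nonneg fun x _ => mul_nonneg (ih a x) (hA x b)

lemma pow_support_mono {A P : Matrix (Fin n) (Fin n) ℝ}
    (hA : ∀ a b, 0 ≤ A a b) (hP : ∀ a b, 0 ≤ P a b)
    (hsupp : ∀ i j, 0 < A i j → 0 < P i j) :
    ∀ m i j, 0 < (A ^ m) i j → 0 < (P ^ m) i j := by
  intro m
  induction m with
  | zero => simp
  | succ m ih =>
    intro i j h
    rw [pow_succ] at h ⊢
    obtain ⟨l, h1, h2⟩ := exists_of_mul_entry_pos (pow_nonneg hA m) hA h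
    exact mul_entry_pos (pow_nonneg hP m) hP (ih i l h1) (hsupp l j h2)

end PrimAux

/-- A product of primitive nonnegative matrices with strictly positive
diagonals is primitive. -/
theorem prod_primitive_of_posDiag {n k : ℕ} (hk : 1 ≤ k)
    (M : Fin k → Matrix (Fin n) (Fin n) ℝ)
    (hnonneg : ∀ i a b, 0 ≤ M i a b)
    (hprim : ∀ i, IsPrimitive (M i))
    (hdiag : ∀ i a, 0 < M i a a) :
    IsPrimitive (List.ofFn M).prod := by
  obtain ⟨k, rfl⟩ : ∃ k', k = k' + 1 := ⟨k - 1, by omega⟩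
  set L := List.ofFn (fun i : Fin k => M i.succ) with hL
  have hsplit : List.ofFn M = M 0 :: L := by rw [hL, List.ofFn_succ]
  have hLmem : ∀ A ∈ L, (∀ a b, 0 ≤ A a b) ∧ ∀ a, 0 < A a a := by
    intro A hA
    rw [hL, List.mem_ofFn] at hA
    obtain ⟨i, rfl⟩ := hA
    exact ⟨hnonneg _, hdiag _⟩
  have hLnonneg := PrimAux.list_prod_nonneg L fun B hB => (hLmem B hB).1
  have hLdiag := PrimAux.list_prod_diag_pos L hLmem
  have hPnonneg : ∀ a b, 0 ≤ (List.ofFn M).prod a b := by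
    rw [hsplit, List.prod_cons]
    intro a b
    rw [Matrix.mul_apply]
    exact Finset.sum_nonneg fun x _ => mul_nonneg (hnonneg 0 a x) (hLnonneg x b)
  have hsupp : ∀ i j, 0 < M 0 i j → 0 < (List.ofFn M).prod i j := by
    intro i j h
    rw [hsplit, List.prod_cons]
    exact PrimAux.mul_entry_pos (hnonneg 0) hLnonneg h (hLdiag j)
  obtain ⟨m, hm, hpos⟩ := hprim 0
  exact ⟨m, hm, fun i j =>
    PrimAux.pow_support_mono (hnonneg 0) hPnonneg hsupp m i j (hpos i j)⟩
end

section
/- Let g be a reflexive relation on a finite nonempty set V and let tf(g) = {(x,y) : C_x ⊆ C_y} be its transitive front, where C_k = {u : (u,k) ∈ g}. Then g ∘ tf(g) = g, and every relation h on V satisfying g ∘ h = g is contained in tf(g). Consequently tf(g) is the unique maximal (densest) relation h on V with g ∘ h = g. -/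
/-- The in-neighborhood C_k = {u : (u,k) ∈ g} of a vertex k in the digraph g. -/
def inNbhd {V : Type*} (g : V → V → Prop) (k : V) : Set V := {u | g u k}

/-- The transitive front tf(g) = {(x,y) : C_x ⊆ C_y}. -/
def transFront {V : Type*} (g : V → V → Prop) (x y : V) : Prop :=
  inNbhd g x ⊆ inNbhd g y

/-- For a reflexive digraph g on a finite nonempty vertex set,
g ∘ tf(g) = g, and every relation h with g ∘ h = g is contained in tf(g);
thus tf(g) is the unique maximal (densest) relation h with g ∘ h = g. -/
theorem transFront_maximally_dense {V : Type*} [Fintype V] [Nonempty V]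
    (g : V → V → Prop) (hrefl : ∀ x, g x x) :
    Relation.Comp g (transFront g) = g ∧
    ∀ h : V → V → Prop, Relation.Comp g h = g →
      ∀ x y, h x y → transFront g x y := by
  constructor
  · funext x y
    ext
    constructor
    · rintro ⟨z, hxz, htf⟩
      exact htf hxz
    · intro hxy
      exact ⟨y, hxy, fun u hu => hu⟩
  · intro h hcomp x y hxy u hu
    have : Relation.Comp g h u y := ⟨x, hu, hxy⟩
    rw [hcomp] at this
    exact this
end

section
/- Let g be a reflexive relation on a finite nonempty set V and define its undirected transitive front utf(g) = {(x,y) : C_x = C_y}, where C_k = {u : (u,k) ∈ g}. Then: (i) utf(g) is an equivalence relation on V (so its components are disjoint cliques); (ii) utf(g) ⊆ g; (iii) g ∘ utf(g) = g; and (iv) every symmetric relation h on V with g ∘ h = g satisfies h ⊆ utf(g), so utf(g) is the unique maximal symmetric relation h with g ∘ h = g. -/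
/-- The undirected transitive front utf(g) = {(x,y) : C_x = C_y}. -/
def undirTransFront {V : Type*} (g : V → V → Prop) (x y : V) : Prop :=
  inNbhd g x = inNbhd g y

/-- For a reflexive digraph g on a finite nonempty vertex set:
(i) utf(g) is an equivalence relation (so its components are disjoint cliques);
(ii) utf(g) ⊆ g; (iii) g ∘ utf(g) = g; (iv) every symmetric relation h with
g ∘ h = g satisfies h ⊆ utf(g), so utf(g) is the unique maximal symmetric
relation h with g ∘ h = g. -/
theorem undirTransFront_properties {V : Type*} [Fintype V] [Nonempty V]
    (g : V → V → Prop) (hrefl : ∀ x, g x x) :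
    Equivalence (undirTransFront g) ∧
    (∀ x y, undirTransFront g x y → g x y) ∧
    Relation.Comp g (undirTransFront g) = g ∧
    ∀ h : V → V → Prop, (∀ x y, h x y → h y x) → Relation.Comp g h = g →
      ∀ x y, h x y → undirTransFront g x y := by
  have hsub : ∀ x y, undirTransFront g x y → g x y := by
    intro x y hxy
    have : x ∈ inNbhd g x := hrefl x
    rw [hxy] at this
    exact this
  refine ⟨⟨fun x => rfl, fun h => h.symm, fun h1 h2 => h1.trans h2⟩, hsub, ?_, ?_⟩
  · funext x y
    apply propext
    constructor
    · rintro ⟨z, hxz, hzy⟩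
      have : x ∈ inNbhd g z := hxz
      rw [hzy] at this
      exact this
    · intro hxy
      exact ⟨y, hxy, rfl⟩
  · intro h hsym hcomp x y hxy
    ext u
    constructor
    · intro hu
      have : Relation.Comp g h u y := ⟨x, hu, hxy⟩
      rw [hcomp] at this
      exact this
    · intro hu
      have : Relation.Comp g h u x := ⟨y, hu, hsym x y hxy⟩
      rw [hcomp] at this
      exact this
end

section
/- Let V be a finite set with n ≥ 1 elements and let g₁, …, g_m be reflexive relations on V, each strongly connected (for every pair of vertices x, y there is a directed path from x to y using edges of that single relation). If m ≥ n − 1, then the composition g₁ ∘ g₂ ∘ ⋯ ∘ g_m is the complete relation V × V. -/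
/-- Composition of a list of relations; the empty composition is equality. -/
def compList {V : Type*} : List (V → V → Prop) → (V → V → Prop)
  | [] => Eq
  | g :: l => Relation.Comp g (compList l)

lemma exists_edge_into {V : Type*} {g : V → V → Prop} {S : Set V} {x y : V}
    (h : Relation.ReflTransGen g x y) (hy : y ∈ S) :
    x ∉ S → ∃ a b, a ∉ S ∧ b ∈ S ∧ g a b := by
  induction h using Relation.ReflTransGen.head_induction_on with
  | refl => exact fun hx => absurd hy hx
  | @head a c hab h ih =>
    intro hx
    by_cases hb : c ∈ S
    · exact ⟨a, c, hx, hb, hab⟩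
    · exact ih hb

lemma compList_refl {V : Type*} :
    ∀ (l : List (V → V → Prop)), (∀ g ∈ l, ∀ x, g x x) → ∀ y, compList l y y
  | [], _, y => rfl
  | g :: l, h, y =>
    ⟨y, h g (by simp) y, compList_refl l (fun r hr => h r (by simp [hr])) y⟩

lemma main_card {V : Type*} [Fintype V] (l : List (V → V → Prop))
    (hrefl : ∀ g ∈ l, ∀ x, g x x)
    (hconn : ∀ g ∈ l, ∀ x y, Relation.ReflTransGen g x y) (y : V) :
    min (Fintype.card V) (1 + l.length) ≤ Set.ncard {x | compList l x y} := by
  induction l with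
  | nil =>
    have : ({x | compList ([] : List (V → V → Prop)) x y} : Set V) = {y} := by
      ext x; simp [compList]
    rw [this, Set.ncard_singleton]
    have : 1 ≤ Fintype.card V := Fintype.card_pos_iff.2 ⟨y⟩
    simp only [List.length_nil]
    omega
  | cons g l ih =>
    have hS := ih (fun r hr => hrefl r (by simp [hr])) (fun r hr => hconn r (by simp [hr]))
    set S : Set V := {x | compList l x y} with hSdef
    set T : Set V := {x | compList (g :: l) x y} with hTdef
    have hsub : S ⊆ T := fun x hx => ⟨x, hrefl g (by simp) x, hx⟩
    have hyS : y ∈ S := compList_refl l (fun r hr => hrefl r (by simp [hr])) y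
    have hTcard : min (Fintype.card V) (S.ncard + 1) ≤ T.ncard := by
      by_cases huniv : S = Set.univ
      · have : T = Set.univ := Set.eq_univ_of_univ_subset (huniv ▸ hsub)
        rw [this, Set.ncard_univ, Nat.card_eq_fintype_card]
        omega
      · obtain ⟨x, hx⟩ := (Set.ne_univ_iff_exists_notMem S).1 huniv
        obtain ⟨a, b, haS, hbS, hab⟩ := exists_edge_into (hconn g (by simp) x y) hyS hx
        have haT : a ∈ T := ⟨b, hab, hbS⟩
        have : insert a S ⊆ T := Set.insert_subset haT hsub
        have h1 : (insert a S).ncard = S.ncard + 1 := Set.ncard_insert_of_notMem haS (Set.toFinite _)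
        have h2 : (insert a S).ncard ≤ T.ncard := Set.ncard_le_ncard this (Set.toFinite _)
        omega
    have hTle : T.ncard ≤ Fintype.card V := by
      have h3 := Set.ncard_le_ncard (Set.subset_univ T) Set.finite_univ
      rwa [Set.ncard_univ, Nat.card_eq_fintype_card] at h3
    simp only [List.length_cons]
    omega

/-- If g₁,…,g_m are reflexive strongly connected relations on a finite set V
with n elements and m ≥ n − 1, then g₁ ∘ ⋯ ∘ g_m is the complete relation. -/
theorem compList_complete_of_strongly_connected {V : Type*} [Fintype V] [Nonempty V]
    {m : ℕ} (g : Fin m → (V → V → Prop))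
    (hrefl : ∀ i x, g i x x)
    (hconn : ∀ i x y, Relation.ReflTransGen (g i) x y)
    (hm : Fintype.card V - 1 ≤ m) :
    ∀ x y, compList (List.ofFn g) x y := by
  intro x y
  have h := main_card (List.ofFn g)
    (fun r hr => by obtain ⟨i, rfl⟩ := List.mem_ofFn.1 hr; exact hrefl i)
    (fun r hr => by obtain ⟨i, rfl⟩ := List.mem_ofFn.1 hr; exact hconn i) y
  rw [List.length_ofFn] at h
  have hn : 1 ≤ Fintype.card V := Fintype.card_pos
  have hmin : min (Fintype.card V) (1 + m) = Fintype.card V := by omega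
  rw [hmin] at h
  have : {x | compList (List.ofFn g) x y} = Set.univ := by
    apply Set.eq_of_subset_of_ncard_le (Set.subset_univ _)
    rwa [Set.ncard_univ, Nat.card_eq_fintype_card]
  exact Set.eq_univ_iff_forall.mp this x
end

section
/- Define F : ℝ → ℝ by F(y) = (y+1)/2 if y < −1 and F(y) = 2y/(y+1) if y ≥ −1; define G : ℝ → ℝ by G(z) = 2z + 1 if z ≤ 0 and G(z) = 2z − 1 if z > 0; and define φ(y) = (y+1)/(y−1). Then for every y ≤ 0 with y ≠ −1: (i) −1 ≤ φ(y) < 1; (ii) F(y) ≤ 0 and F(y) ≠ −1 unless the orbit leaves the domain trivially; and (iii) φ(F(y)) = G(φ(y)). Thus φ conjugates the piecewise map F on the nonpositive reals to the map z ↦ 2z+1 (z ≤ 0), z ↦ 2z−1 (z > 0) on [−1,1), which is conjugate to the baker's map. -/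
/-- The piecewise map F(y) = (y+1)/2 if y < −1, F(y) = 2y/(y+1) otherwise. -/
noncomputable def Fmap (y : ℝ) : ℝ := if y < -1 then (y + 1) / 2 else 2 * y / (y + 1)

/-- The map G(z) = 2z+1 if z ≤ 0, G(z) = 2z−1 if z > 0 (conjugate to the
baker's map). -/
noncomputable def Gmap (z : ℝ) : ℝ := if z ≤ 0 then 2 * z + 1 else 2 * z - 1

/-- The change of coordinates φ(y) = (y+1)/(y−1). -/
noncomputable def phiMap (y : ℝ) : ℝ := (y + 1) / (y - 1)

/-- For every y ≤ 0 with y ≠ −1: (i) −1 ≤ φ(y) < 1; (ii) F(y) ≤ 0, and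
F(y) = −1 only at the trivial exceptional points y = −3 and y = −1/3 (where
the orbit leaves the domain trivially); (iii) φ(F(y)) = G(φ(y)). Thus φ
conjugates F on the nonpositive reals to the map G on [−1,1). -/
theorem phi_conjugates_F_to_G (y : ℝ) (hy : y ≤ 0) (hy1 : y ≠ -1) :
    (-1 ≤ phiMap y ∧ phiMap y < 1) ∧
    (Fmap y ≤ 0 ∧ (Fmap y = -1 → y = -3 ∨ y = -1/3)) ∧
    phiMap (Fmap y) = Gmap (phiMap y) := by
  have hym : y - 1 < 0 := by linarith
  have hymne : y - 1 ≠ 0 := ne_of_lt hym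
  rcases lt_or_ge y (-1) with h | h
  · -- y < -1
    have hp1 : y + 1 < 0 := by linarith
    have hF : Fmap y = (y + 1) / 2 := if_pos h
    have hphi : phiMap y = (y + 1) / (y - 1) := rfl
    have hpos : 0 < phiMap y := by
      rw [hphi]; exact div_pos_of_neg_of_neg hp1 hym
    have hlt1 : phiMap y < 1 := by
      rw [hphi, div_lt_iff_of_neg hym]; linarith
    refine ⟨⟨by linarith, hlt1⟩, ⟨?_, ?_⟩, ?_⟩
    · rw [hF]; linarith
    · intro hFe; rw [hF] at hFe; left; linarith [(div_eq_iff (two_ne_zero)).mp hFe]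
    · rw [hF]
      have hG : Gmap (phiMap y) = 2 * phiMap y - 1 := if_neg (not_le.mpr hpos)
      rw [hG, hphi]
      have hd : (y + 1) / 2 - 1 ≠ 0 := by
        intro hc
        have : y + 1 = 2 := by linarith [(sub_eq_zero.mp hc)]
        linarith
      unfold phiMap
      have hne2 : (-1 : ℝ) + y ≠ 0 := fun hc => hymne (by linarith)
      field_simp [hd, hne2]
      rw [div_eq_iff (by intro hc; exact hymne (by linarith))]
      ring
  · -- -1 ≤ y ≤ 0, y ≠ -1 so -1 < y
    have h' : -1 < y := lt_of_le_of_ne h (Ne.symm hy1)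
    have hp1 : 0 < y + 1 := by linarith
    have hp1ne : y + 1 ≠ 0 := ne_of_gt hp1
    have hF : Fmap y = 2 * y / (y + 1) := if_neg (not_lt.mpr h)
    have hphi : phiMap y = (y + 1) / (y - 1) := rfl
    have hnp : phiMap y ≤ 0 := by
      rw [hphi]
      exact div_nonpos_of_nonneg_of_nonpos (le_of_lt hp1) (le_of_lt hym)
    have hge : -1 ≤ phiMap y := by
      rw [hphi, le_div_iff_of_neg hym]; linarith
    refine ⟨⟨hge, by linarith⟩, ⟨?_, ?_⟩, ?_⟩
    · rw [hF]
      exact div_nonpos_of_nonpos_of_nonneg (by linarith) (le_of_lt hp1)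
    · intro hFe; rw [hF] at hFe; right
      have := (div_eq_iff hp1ne).mp hFe
      linarith
    · rw [hF]
      have hG : Gmap (phiMap y) = 2 * phiMap y + 1 := if_pos hnp
      rw [hG, hphi]
      have hd : 2 * y / (y + 1) - 1 ≠ 0 := by
        intro hc
        have h2 : 2 * y = y + 1 := by
          have := sub_eq_zero.mp hc
          field_simp at this
          linarith
        linarith
      unfold phiMap
      have hne2 : (-1 : ℝ) + y ≠ 0 := fun hc => hymne (by linarith)
      field_simp [hd, hne2]
      rw [div_eq_iff (by intro hc; exact hymne (by linarith))]
      ring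
end
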